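/- In a multicube P, for a ≤ b one has Δ(b,a) = b ∧ Δ(1, c(a,b)), where c(a,b) = Γ(a) + X_{σ(a) ∪ σ(b)ᶜ}, 1 = V, and Δ(1, x) = −Γ(x) + X_{σ(x)}. -/

import Mathlib

/-- The coset a + X_A, where X_A is the submodule of vectors supported on A. -/
def cosetSet {n : ℕ} {M : Fin n → Type*} [∀ i, AddCommGroup (M i)]
    (a : ∀ i, M i) (A : Set (Fin n)) : Set (∀ i, M i) :=
  {v | ∀ i ∉ A, v i = a i}

/-- The critical vector Γ of the coset a + X_A: the unique element of the coset
whose support is disjoint from A. -/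
noncomputable def gam {n : ℕ} {M : Fin n → Type*} [∀ i, AddCommGroup (M i)]
    (a : ∀ i, M i) (A : Set (Fin n)) : ∀ i, M i :=
  open Classical in fun i => if i ∈ A then 0 else a i

/-- In a multicube, for a ≤ b one has Δ(b,a) = b ∧ Δ(1, c(a,b)), where
c(a,b) = Γ(a) + X_{σ(a) ∪ σ(b)ᶜ} and Δ(1,x) = −Γ(x) + X_{σ(x)}. -/
theorem multicube_delta_eq_meet {n : ℕ} {M : Fin n → Type*}
    [∀ i, AddCommGroup (M i)] [∀ i, Fintype (M i)]
    (hodd : ∀ i, Odd (Fintype.card (M i)))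
    (a b : ∀ i, M i) (A B : Set (Fin n))
    (hle : cosetSet a A ⊆ cosetSet b B) :
    cosetSet (2 • gam b B - gam a A) A =
      cosetSet b B ∩ cosetSet (-(gam (gam a A) (A ∪ Bᶜ))) (A ∪ Bᶜ) := by
  classical
  have ha : a ∈ cosetSet a A := fun i _ => rfl
  have h1 : ∀ i, i ∉ A → i ∉ B → a i = b i := fun i _ hiB => hle ha i hiB
  have h2 : ∀ i, i ∈ A → i ∉ B → ∀ m : M i, m = b i := by
    intro i hiA hiB m
    have hm : Function.update a i m ∈ cosetSet a A := by
      intro j hj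
      have hne : j ≠ i := fun h => hj (h ▸ hiA)
      simp [Function.update_of_ne hne]
    have := hle hm i hiB
    simpa using this
  ext v
  simp only [cosetSet, Set.mem_setOf_eq, Set.mem_inter_iff, Set.mem_union,
    Set.mem_compl_iff, not_or, not_not]
  constructor
  · intro h
    refine ⟨?_, ?_⟩
    · intro i hiB
      by_cases hiA : i ∈ A
      · exact (h2 i hiA hiB (v i))
      · have hv := h i hiA
        simp only [Pi.sub_apply, Pi.smul_apply, gam, if_neg hiA, if_neg hiB] at hv
        rw [hv, ← h1 i hiA hiB, two_smul]
        abel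
    · intro i ⟨hiA, hiB⟩
      have hv := h i hiA
      simp only [Pi.sub_apply, Pi.smul_apply, Pi.neg_apply, gam, if_neg hiA, if_pos hiB,
        Set.mem_union, Set.mem_compl_iff, hiB, not_true, or_false, if_true] at hv ⊢
      rw [hv]
      abel
  · rintro ⟨hB, hAB⟩ i hiA
    by_cases hiB : i ∈ B
    · have hv := hAB i ⟨hiA, hiB⟩
      simp only [Pi.neg_apply, gam, Set.mem_union, Set.mem_compl_iff, hiA, hiB,
        not_true, or_false, if_neg, if_pos] at hv
      simp only [Pi.sub_apply, Pi.smul_apply, gam, if_neg hiA, if_pos hiB, hv]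
      abel
    · have hv := hB i hiB
      have heq : (2 • gam b B - gam a A) i = 2 • b i - a i := by
        simp [gam, hiA, hiB]
      rw [heq, hv, h1 i hiA hiB, two_smul]
      abel
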